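/- Let Ĉ be a symmetric positive semidefinite d×d matrix and H a q×d matrix such that I + HĈHᵀ is invertible. Define C = Ĉ − ĈHᵀ(HĈHᵀ + I)⁻¹HĈ. Then HCHᵀ = HĈHᵀ(HĈHᵀ + I)⁻¹, and consequently 0 ⪯ HCHᵀ ⪯ I_q. -/
import Mathlib


open Matrix

/-- Kalman covariance update identity: with
`C = Ĉ − ĈHᵀ(HĈHᵀ + I)⁻¹HĈ` one has `HCHᵀ = HĈHᵀ(HĈHᵀ + I)⁻¹`,
and `0 ⪯ HCHᵀ ⪯ I`. -/
theorem kalman_observable_covariance {d q : ℕ}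
    (Chat : Matrix (Fin d) (Fin d) ℝ) (H : Matrix (Fin q) (Fin d) ℝ)
    (hC : Chat.PosSemidef) (hinv : IsUnit (1 + H * Chat * Hᵀ).det) :
    let C := Chat - Chat * Hᵀ * (H * Chat * Hᵀ + 1)⁻¹ * H * Chat
    H * C * Hᵀ = H * Chat * Hᵀ * (H * Chat * Hᵀ + 1)⁻¹ ∧
    (H * C * Hᵀ).PosSemidef ∧ (1 - H * C * Hᵀ).PosSemidef := by
  intro C
  set S := H * Chat * Hᵀ with hS
  have hSpsd : S.PosSemidef := by
    have := hC.mul_mul_conjTranspose_same H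
    rwa [conjTranspose_eq_transpose_of_trivial] at this
  have hSherm : Sᴴ = S := hSpsd.isHermitian
  have hdet : IsUnit (S + 1).det := by rwa [add_comm] at hinv
  have hmulinv : (S + 1) * (S + 1)⁻¹ = 1 := mul_nonsing_inv _ hdet
  have hinvmul : (S + 1)⁻¹ * (S + 1) = 1 := nonsing_inv_mul _ hdet
  have hinvherm : ((S + 1)⁻¹)ᴴ = (S + 1)⁻¹ :=
    (hSpsd.isHermitian.add isHermitian_one).inv
  -- key identity
  have hkey : H * C * Hᵀ = S * (S + 1)⁻¹ := by
    have expand : H * C * Hᵀ = S - S * (S + 1)⁻¹ * S := by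
      simp only [C, Matrix.mul_sub, Matrix.sub_mul, hS, Matrix.mul_assoc]
    rw [expand]
    have h2 : S * (S + 1)⁻¹ * (S + 1) = S := by
      rw [Matrix.mul_assoc, hinvmul, Matrix.mul_one]
    calc S - S * (S + 1)⁻¹ * S
        = S * (S + 1)⁻¹ * (S + 1) - S * (S + 1)⁻¹ * S := by rw [h2]
      _ = S * (S + 1)⁻¹ * ((S + 1) - S) := (Matrix.mul_sub _ _ _).symm
      _ = S * (S + 1)⁻¹ := by simp
  refine ⟨hkey, ?_, ?_⟩
  · -- S (S+1)⁻¹ = (S+1)⁻¹ (SᴴS + S) (S+1)⁻¹ᴴ is PSD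
    have hM : (Sᴴ * S + S).PosSemidef :=
      (posSemidef_conjTranspose_mul_self S).add hSpsd
    have hpsd := hM.mul_mul_conjTranspose_same (S + 1)⁻¹
    rw [hinvherm] at hpsd
    have heq : (S + 1)⁻¹ * (Sᴴ * S + S) * (S + 1)⁻¹ = S * (S + 1)⁻¹ := by
      have h1 : Sᴴ * S + S = S * (S + 1) := by
        rw [hSherm]; simp [Matrix.mul_add]
      rw [h1]
      calc (S + 1)⁻¹ * (S * (S + 1)) * (S + 1)⁻¹
          = (S + 1)⁻¹ * S * ((S + 1) * (S + 1)⁻¹) := by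
            simp only [Matrix.mul_assoc]
        _ = (S + 1)⁻¹ * S := by rw [hmulinv, Matrix.mul_one]
        _ = (S + 1)⁻¹ * S * ((S + 1) * (S + 1)⁻¹) := by
            rw [hmulinv, Matrix.mul_one]
        _ = (S + 1)⁻¹ * ((S + 1) * S) * (S + 1)⁻¹ := by
            have : S * (S + 1) = (S + 1) * S := by
              simp [Matrix.mul_add, Matrix.add_mul]
            simp only [Matrix.mul_assoc, ← this]
        _ = S * (S + 1)⁻¹ := by
            rw [← Matrix.mul_assoc, ← Matrix.mul_assoc, hinvmul, Matrix.one_mul]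
    rw [heq] at hpsd
    rwa [hkey]
  · -- 1 - S(S+1)⁻¹ = (S+1)⁻¹ is PSD
    have hPD : (S + 1).PosDef := Matrix.PosDef.posSemidef_add hSpsd Matrix.PosDef.one
    have hinvPD : ((S + 1)⁻¹).PosDef := hPD.inv
    have heq : 1 - S * (S + 1)⁻¹ = (S + 1)⁻¹ := by
      calc 1 - S * (S + 1)⁻¹ = (S + 1) * (S + 1)⁻¹ - S * (S + 1)⁻¹ := by rw [hmulinv]
        _ = ((S + 1) - S) * (S + 1)⁻¹ := by rw [Matrix.sub_mul]
        _ = (S + 1)⁻¹ := by simp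
    rw [hkey, heq]
    exact hinvPD.posSemidef
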